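/- Under the blanket assumptions with block structure f(x) = Σ_{i=1}^N f_i(x_i), assume the level set X := {x: F(x) ≤ F(x⁰)} is nonempty and compact, fix α̲ > 0, and let S := {(x,y) ∈ X × 𝒴: η(x,y) > 0}, where ḡ := sup_{z∈X} g(z), X_{α̲} := {z: dist²(z,X) ≤ ḡ/α̲} and 𝒴 := ∪_{z ∈ X_{α̲}} ∂g(z). Then for every σ > 0 there exists ᾱ > 0 such that: for every (x,y) ∈ S with Q(x,y) ≤ F(x⁰), every α ∈ (0,ᾱ), every block index i ∈ {1,…,N}, every x⁺_i ∈ prox_{αf_i}(x_i − α∇_i h(x) + α Q(x,y) y_i), and every real c ≥ Q(x,y), the vector x⁺ obtained from x by replacing its i-th block with x⁺_i satisfies ζ(x⁺) + (σ/2)‖x⁺ − x‖₂² ≤ c·η(x⁺, y). -/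

import Mathlib

open Filter Topology Set
open scoped RealInnerProductSpace Pointwise NNReal

noncomputable section

namespace Paper

variable {E : Type*} [NormedAddCommGroup E] [InnerProductSpace ℝ E]

/-- The effective domain of an extended-real-valued function. -/
def edom (φ : E → EReal) : Set E := {x | φ x ≠ ⊤}

/-- A function with values in `(-∞, +∞]` is proper if it is not identically `+∞`
and never takes the value `-∞`. -/
def Proper (φ : E → EReal) : Prop := (∃ x, φ x ≠ ⊤) ∧ ∀ x, φ x ≠ ⊥

/-- The Fréchet subdifferential of `φ` at `x`. -/
def frSubdiff (φ : E → EReal) (x : E) : Set E :=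
  {y | φ x ≠ ⊤ ∧ 0 ≤ Filter.liminf
      (fun z : E => (φ z - φ x - ((⟪y, z - x⟫ : ℝ) : EReal)) * ((‖z - x‖⁻¹ : ℝ) : EReal))
      (𝓝[≠] x)}

/-- The limiting (Mordukhovich) subdifferential of `φ` at `x`. -/
def limSubdiff (φ : E → EReal) (x : E) : Set E :=
  {y | ∃ u v : ℕ → E,
      Tendsto u atTop (𝓝 x) ∧ Tendsto (fun k => φ (u k)) atTop (𝓝 (φ x)) ∧
      (∀ k, v k ∈ frSubdiff φ (u k)) ∧ Tendsto v atTop (𝓝 y)}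

/-- The convex subdifferential of a real-valued function. -/
def cvxSubdiff (g : E → ℝ) (x : E) : Set E :=
  {y | ∀ z, g x + ⟪y, z - x⟫ ≤ g z}

/-- The convex subdifferential of an extended-real-valued function. -/
def cvxSubdiffE (φ : E → EReal) (x : E) : Set E :=
  {y | ∀ z, φ x + ((⟪y, z - x⟫ : ℝ) : EReal) ≤ φ z}

/-- The Fenchel conjugate of an extended-real-valued function. -/
def fconjE (φ : E → EReal) : E → EReal :=
  fun y => ⨆ x : E, (((⟪x, y⟫ : ℝ) : EReal) - φ x)

/-- The Fenchel conjugate of a real-valued function. -/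
def fconj (g : E → ℝ) : E → EReal := fconjE (fun x => ((g x : ℝ) : EReal))

/-- `φ` satisfies the calmness condition at `x` relative to `A`. -/
def CalmAt (φ : E → EReal) (x : E) (A : Set E) : Prop :=
  ∃ κ : ℝ, 0 < κ ∧ ∃ B ∈ 𝓝 x, ∀ u ∈ B ∩ A,
    φ u ≤ φ x + ((κ * ‖u - x‖ : ℝ) : EReal) ∧ φ x ≤ φ u + ((κ * ‖u - x‖ : ℝ) : EReal)

/-- `φ` satisfies the calmness condition on `A`. -/
def CalmOn (φ : E → EReal) (A : Set E) : Prop := ∀ x ∈ A, CalmAt φ x A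

/-- The Kurdyka–Łojasiewicz property of `φ` at `x`. -/
def KLAt (φ : E → EReal) (x : E) : Prop :=
  ∃ ε > (0 : ℝ), ∃ δ > (0 : ℝ), ∃ ϕ ϕ' : ℝ → ℝ,
    ϕ 0 = 0 ∧ ContinuousOn ϕ (Set.Ico 0 ε) ∧ ConcaveOn ℝ (Set.Ico 0 ε) ϕ ∧
    (∀ s ∈ Set.Ioo (0 : ℝ) ε, HasDerivAt ϕ (ϕ' s) s) ∧
    ContinuousOn ϕ' (Set.Ioo 0 ε) ∧ (∀ s ∈ Set.Ioo (0 : ℝ) ε, 0 < ϕ' s) ∧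
    ∀ z ∈ Metric.ball x δ, φ x < φ z → φ z < φ x + (ε : EReal) →
      1 ≤ ENNReal.ofReal (ϕ' ((φ z).toReal - (φ x).toReal)) *
        EMetric.infEdist (0 : E) (limSubdiff φ z)

/-- The KL property of `φ` at `x` with exponent `θ`. -/
def KLExpAt (φ : E → EReal) (x : E) (θ : ℝ) : Prop :=
  ∃ c > (0 : ℝ), ∃ ε > (0 : ℝ), ∃ δ > (0 : ℝ),
    ∀ z ∈ Metric.ball x δ, φ x < φ z → φ z < φ x + (ε : EReal) →
      ENNReal.ofReal (c * ((φ z).toReal - (φ x).toReal) ^ θ) ≤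
        EMetric.infEdist (0 : E) (limSubdiff φ z)

/-- The (possibly multivalued) proximity operator of `φ`. -/
def proxSet (φ : E → EReal) (u : E) : Set E :=
  {z | ∀ w, φ z + ((‖z - u‖ ^ 2 / 2 : ℝ) : EReal) ≤ φ w + ((‖w - u‖ ^ 2 / 2 : ℝ) : EReal)}

/-- A positive scaling of an extended-real-valued function. -/
def scaleE (α : ℝ) (φ : E → EReal) : E → EReal := fun x => ((α : ℝ) : EReal) * φ x

/-- `h` is locally Lipschitz differentiable on `s`. -/
def LocLipGradOn [CompleteSpace E] (h : E → ℝ) (s : Set E) : Prop :=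
  (∀ x ∈ s, DifferentiableAt ℝ h x) ∧
  ∀ x ∈ s, ∃ U ∈ 𝓝 x, ∃ L : ℝ, ∀ u ∈ U ∩ s, ∀ v ∈ U ∩ s,
    ‖gradient h u - gradient h v‖ ≤ L * ‖u - v‖

/-- The numerator `ζ = f + h`. -/
def zeta (f : E → EReal) (h : E → ℝ) (x : E) : EReal := f x + ((h x : ℝ) : EReal)

/-- `η(x,y) = ⟨x,y⟩ − g^*(y)`. -/
def eta (g : E → ℝ) (x y : E) : EReal := ((⟪x, y⟫ : ℝ) : EReal) - fconj g y

/-- The extended objective of the fractional problem. -/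
def Ffun (f : E → EReal) (g h : E → ℝ) (x : E) : EReal :=
  if g x ≠ 0 ∧ f x ≠ ⊤ then ((((f x).toReal + h x) / g x : ℝ) : EReal) else ⊤

/-- The extended objective of the reformulated problem. -/
def Qfun (f : E → EReal) (g h : E → ℝ) (x y : E) : EReal :=
  if f x ≠ ⊤ ∧ 0 < eta g x y then
    ((((f x).toReal + h x) / (eta g x y).toReal : ℝ) : EReal) else ⊤

/-- Pack a pair into the `ℓ²` product space. -/
def mk2 (x y : E) : WithLp 2 (E × E) := (WithLp.equiv 2 (E × E)).symm (x, y)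

def pr1 (p : WithLp 2 (E × E)) : E := (WithLp.equiv 2 (E × E) p).1

def pr2 (p : WithLp 2 (E × E)) : E := (WithLp.equiv 2 (E × E) p).2

/-- `Q` as a function on the `ℓ²` product space. -/
def Qpair (f : E → EReal) (g h : E → ℝ) (p : WithLp 2 (E × E)) : EReal :=
  Qfun f g h (pr1 p) (pr2 p)

/-- The blanket assumptions of the paper. -/
structure Blanket [CompleteSpace E] (f : E → EReal) (g h : E → ℝ) : Prop where
  f_proper : Proper f
  f_lsc : LowerSemicontinuous f
  f_cont : ContinuousOn f (edom f)
  f_bddBelow : ∃ m : ℝ, ∀ x, (m : EReal) ≤ f x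
  h_lsc : LowerSemicontinuous h
  h_diff : LocLipGradOn h {x | g x ≠ 0}
  g_convex : ConvexOn ℝ Set.univ g
  g_nonneg : ∀ x, 0 ≤ g x
  omega_nonempty : ∃ x, g x ≠ 0
  zeta_nonneg : ∀ x, f x ≠ ⊤ → 0 ≤ zeta f h x

/-- `x` is a critical point of `F`: `0 ∈ ∂̂f(x) + ∇h(x) − F(x)·∂g(x)`. -/
def IsCritF [CompleteSpace E] (f : E → EReal) (g h : E → ℝ) (x : E) : Prop :=
  g x ≠ 0 ∧ f x ≠ ⊤ ∧
  ∃ u ∈ frSubdiff f x, ∃ v ∈ cvxSubdiff g x,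
    u + gradient h x - (Ffun f g h x).toReal • v = 0

/-- The level set `X = {x : F(x) ≤ F(x⁰)}`. -/
def lvlSet (f : E → EReal) (g h : E → ℝ) (x0 : E) : Set E :=
  {x | Ffun f g h x ≤ Ffun f g h x0}

/-- The enlargement `X_{α̲}` of the level set. -/
def Xal (f : E → EReal) (g h : E → ℝ) (x0 : E) (αl : ℝ) : Set E :=
  {z | (Metric.infDist z (lvlSet f g h x0)) ^ 2 ≤ sSup (g '' lvlSet f g h x0) / αl}

/-- The compact set `𝒴 = ∪_{z ∈ X_{α̲}} ∂g(z)`. -/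
def Yset (f : E → EReal) (g h : E → ℝ) (x0 : E) (αl : ℝ) : Set E :=
  ⋃ z ∈ Xal f g h x0 αl, cvxSubdiff g z

/-- The set `S = {(x,y) ∈ X × 𝒴 : η(x,y) > 0}`. -/
def Sset (f : E → EReal) (g h : E → ℝ) (x0 : E) (αl : ℝ) : Set (E × E) :=
  {p | p.1 ∈ lvlSet f g h x0 ∧ p.2 ∈ Yset f g h x0 αl ∧ 0 < eta g p.1 p.2}

/-- The set of accumulation points of a sequence. -/
def accSet {X : Type*} [TopologicalSpace X] (pt : ℕ → X) : Set X :=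
  {p | ∃ σ : ℕ → ℕ, StrictMono σ ∧ Tendsto (pt ∘ σ) atTop (𝓝 p)}

/-- A polyhedral function: its epigraph is a finite intersection of closed half-spaces. -/
def IsPolyhedralFn (φ : E → EReal) : Prop :=
  ∃ (m : ℕ) (w : Fin m → E) (c b : Fin m → ℝ),
    ∀ (x : E) (a : ℝ), (φ x ≤ (a : EReal) ↔ ∀ i, ⟪w i, x⟫ + c i * a ≤ b i)


/-- The block product space. -/
abbrev BE {N : ℕ} (d : Fin N → ℕ) : Type :=
  PiLp 2 fun i => EuclideanSpace ℝ (Fin (d i))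

/-- Update the `i`-th block of `x`. -/
def bUpd {N : ℕ} {d : Fin N → ℕ} (x : BE d) (i : Fin N)
    (w : EuclideanSpace ℝ (Fin (d i))) : BE d :=
  WithLp.toLp 2 (Function.update x.ofLp i w)

/-- The block-separable function `f(x) = ∑ᵢ fᵢ(xᵢ)`. -/
def fsum {N : ℕ} {d : Fin N → ℕ} (fb : ∀ i, EuclideanSpace ℝ (Fin (d i)) → EReal)
    (x : BE d) : EReal := ∑ i, fb i (x i)

/-! ### Auxiliary lemmas -/

section Aux

variable {F : Type*} [NormedAddCommGroup F] [InnerProductSpace ℝ F]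

lemma descent_lemma [CompleteSpace F] (h : F → ℝ) (x e : F) (L : ℝ) (hL : 0 ≤ L)
    (hdiff : ∀ t ∈ Set.Icc (0:ℝ) 1, DifferentiableAt ℝ h (x + t • e))
    (hlip : ∀ s ∈ Set.Icc (0:ℝ) 1, ∀ t ∈ Set.Icc (0:ℝ) 1,
      ‖gradient h (x + s • e) - gradient h (x + t • e)‖ ≤ L * ‖(x + s • e) - (x + t • e)‖) :
    h (x + e) ≤ h x + ⟪gradient h x, e⟫ + L / 2 * ‖e‖ ^ 2 := by
  set φ' : ℝ → ℝ := fun t => ⟪gradient h (x + t • e), e⟫ with hφ'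
  have hline : ∀ t : ℝ, HasDerivAt (fun s : ℝ => x + s • e) e t := by
    intro t
    simpa using ((hasDerivAt_id t).smul_const e).const_add x
  have hd : ∀ t ∈ Set.Icc (0:ℝ) 1, HasDerivAt (fun s => h (x + s • e)) (φ' t) t := by
    intro t ht
    have h1 : HasGradientAt h (gradient h (x + t • e)) (x + t • e) :=
      (hdiff t ht).hasGradientAt
    have h2 := h1.hasFDerivAt.comp_hasDerivAt t (hline t)
    rw [InnerProductSpace.toDual_apply_apply] at h2
    exact h2
  have hlipφ : LipschitzOnWith (Real.toNNReal (L * ‖e‖ ^ 2)) φ' (Set.Icc 0 1) := by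
    rw [lipschitzOnWith_iff_dist_le_mul]
    intro s hs t ht
    have h1 : dist (φ' s) (φ' t) ≤ ‖gradient h (x + s • e) - gradient h (x + t • e)‖ * ‖e‖ := by
      rw [Real.dist_eq]
      have : φ' s - φ' t = ⟪gradient h (x + s • e) - gradient h (x + t • e), e⟫ := by
        simp [hφ', inner_sub_left]
      rw [this]
      exact abs_real_inner_le_norm _ _
    have h2 := hlip s hs t ht
    have h3 : ‖(x + s • e) - (x + t • e)‖ = |s - t| * ‖e‖ := by
      have : (x + s • e) - (x + t • e) = (s - t) • e := by module
      rw [this, norm_smul, Real.norm_eq_abs]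
    have h4 : ‖gradient h (x + s • e) - gradient h (x + t • e)‖ ≤ L * (|s-t| * ‖e‖) := by
      rw [← h3]; exact h2
    calc dist (φ' s) (φ' t) ≤ (L * (|s-t| * ‖e‖)) * ‖e‖ :=
          h1.trans (mul_le_mul_of_nonneg_right h4 (norm_nonneg e))
      _ ≤ (Real.toNNReal (L * ‖e‖ ^ 2)) * dist s t := by
          rw [Real.coe_toNNReal _ (by positivity), Real.dist_eq]
          nlinarith [abs_nonneg (s - t), norm_nonneg e, sq_abs (s-t)]
  have hcont : ContinuousOn φ' (Set.Icc 0 1) := hlipφ.continuousOn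
  have hint : IntervalIntegrable φ' MeasureTheory.volume 0 1 :=
    ContinuousOn.intervalIntegrable (by rw [Set.uIcc_of_le zero_le_one]; exact hcont)
  have heq : ∫ t in (0:ℝ)..1, φ' t = h (x + e) - h x := by
    have := intervalIntegral.integral_eq_sub_of_hasDerivAt (f := fun s => h (x + s • e)) (f' := φ')
      (by intro t ht; exact hd t (by rwa [Set.uIcc_of_le zero_le_one] at ht)) hint
    simpa using this
  have hmono : ∫ t in (0:ℝ)..1, φ' t ≤ ∫ t in (0:ℝ)..1, (φ' 0 + L * ‖e‖^2 * t) := by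
    refine intervalIntegral.integral_mono_on zero_le_one hint ?_ ?_
    · exact (intervalIntegrable_const.add ((intervalIntegral.intervalIntegrable_id.const_mul _)))
    · intro t ht
      have h1 : φ' t - φ' 0 = ⟪gradient h (x + t • e) - gradient h (x + (0:ℝ) • e), e⟫ := by
        simp [hφ', inner_sub_left]
      have h2 : φ' t - φ' 0 ≤ L * ‖e‖^2 * t := by
        calc φ' t - φ' 0 = ⟪gradient h (x + t • e) - gradient h (x + (0:ℝ) • e), e⟫ := h1
          _ ≤ ‖gradient h (x + t • e) - gradient h (x + (0:ℝ) • e)‖ * ‖e‖ :=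
              real_inner_le_norm _ _
          _ ≤ (L * ‖(x + t • e) - (x + (0:ℝ) • e)‖) * ‖e‖ :=
              mul_le_mul_of_nonneg_right (hlip t ht 0 (by simp)) (norm_nonneg e)
          _ = (L * (|t| * ‖e‖)) * ‖e‖ := by
              congr 2
              simp [norm_smul]
          _ ≤ L * ‖e‖^2 * t := by
              rw [abs_of_nonneg ht.1]; nlinarith [norm_nonneg e, ht.1]
      linarith
  have hval : ∫ t in (0:ℝ)..1, (φ' 0 + L * ‖e‖^2 * t) = φ' 0 + L * ‖e‖^2 / 2 := by
    rw [intervalIntegral.integral_add intervalIntegrable_const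
        ((intervalIntegral.intervalIntegrable_id.const_mul _)),
      intervalIntegral.integral_const, intervalIntegral.integral_const_mul,
      integral_id]
    norm_num
    ring
  have hφ0 : φ' 0 = ⟪gradient h x, e⟫ := by simp [hφ']
  rw [heq] at hmono
  rw [hval, hφ0] at hmono
  linarith

lemma uniform_descent [CompleteSpace F] (h : F → ℝ) (Ω : Set F) (hΩ : IsOpen Ω)
    (hdiff : ∀ x ∈ Ω, DifferentiableAt ℝ h x)
    (hloc : ∀ x ∈ Ω, ∃ U ∈ nhds x, ∃ L : ℝ, ∀ u ∈ U ∩ Ω, ∀ v ∈ U ∩ Ω,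
      ‖gradient h u - gradient h v‖ ≤ L * ‖u - v‖)
    (X : Set F) (hX : IsCompact X) (hXne : X.Nonempty) (hXΩ : X ⊆ Ω) :
    ∃ ε > (0:ℝ), ∃ L ≥ (0:ℝ), ∃ G : ℝ,
      (∀ x ∈ X, ‖gradient h x‖ ≤ G) ∧
      (∀ x ∈ X, ∀ e : F, ‖e‖ ≤ ε →
        h (x + e) ≤ h x + ⟪gradient h x, e⟫ + L / 2 * ‖e‖ ^ 2) := by
  have key : ∀ x ∈ X, ∃ r > (0:ℝ), ∃ L ≥ (0:ℝ), Metric.ball x (3 * r) ⊆ Ω ∧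
      ∀ u ∈ Metric.ball x (3 * r), ∀ v ∈ Metric.ball x (3 * r),
        ‖gradient h u - gradient h v‖ ≤ L * ‖u - v‖ := by
    intro x hx
    obtain ⟨U, hU, L, hL⟩ := hloc x (hXΩ hx)
    have hUΩ : U ∩ Ω ∈ nhds x := Filter.inter_mem hU (hΩ.mem_nhds (hXΩ hx))
    obtain ⟨δ, hδ, hball⟩ := Metric.mem_nhds_iff.mp hUΩ
    refine ⟨δ/3, by linarith, max L 0, le_max_right _ _, ?_, ?_⟩
    · intro u hu
      exact (hball (by simpa [show 3*(δ/3) = δ by ring] using hu)).2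
    · intro u hu v hv
      have hu' : u ∈ U ∩ Ω := hball (by simpa [show 3*(δ/3) = δ by ring] using hu)
      have hv' : v ∈ U ∩ Ω := hball (by simpa [show 3*(δ/3) = δ by ring] using hv)
      exact (hL u hu' v hv').trans
        (mul_le_mul_of_nonneg_right (le_max_left _ _) (norm_nonneg _))
  choose! r hr L hL hsub hlip using key
  obtain ⟨t, htX, hcover⟩ := hX.elim_nhds_subcover (fun x => Metric.ball x (r x)) (by
    intro x hx
    exact Metric.ball_mem_nhds x (hr x hx))
  have htne : t.Nonempty := by
    obtain ⟨x, hx⟩ := hXne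
    obtain ⟨z, hz, _⟩ := Set.mem_iUnion₂.mp (hcover hx)
    exact ⟨z, hz⟩
  set ε := t.inf' htne r with hε
  set LL := t.sup' htne L with hLL
  set G := t.sup' htne (fun z => ‖gradient h z‖ + L z * (3 * r z)) with hG
  have hmem : ∀ x ∈ X, ∃ z ∈ t, x ∈ Metric.ball z (r z) := by
    intro x hx
    obtain ⟨z, hz, hxz⟩ := Set.mem_iUnion₂.mp (hcover hx)
    exact ⟨z, hz, hxz⟩
  have hεpos : 0 < ε := by
    rw [hε]
    apply Finset.lt_inf'_iff .. |>.mpr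
    intro z hz
    exact hr z (htX z hz)
  have hLL0 : (0:ℝ) ≤ LL := by
    obtain ⟨z, hz⟩ := htne
    exact le_trans (hL z (htX z hz)) (Finset.le_sup' L hz)
  refine ⟨ε, hεpos, LL, hLL0, G, ?_, ?_⟩
  · intro x hx
    obtain ⟨z, hz, hxz⟩ := hmem x hx
    have hzX := htX z hz
    have hx3 : x ∈ Metric.ball z (3 * r z) := by
      rw [Metric.mem_ball] at hxz ⊢
      have := hr z hzX
      linarith
    have hz3 : z ∈ Metric.ball z (3 * r z) := by
      rw [Metric.mem_ball]
      have := hr z hzX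
      simp [dist_self]; linarith
    have h1 : ‖gradient h x - gradient h z‖ ≤ L z * ‖x - z‖ := hlip z hzX x hx3 z hz3
    have h2 : ‖x - z‖ ≤ 3 * r z := by
      rw [← dist_eq_norm]
      exact le_of_lt (by rw [Metric.mem_ball] at hx3; exact hx3)
    have h3 : ‖gradient h x‖ ≤ ‖gradient h z‖ + L z * (3 * r z) := by
      have := norm_sub_norm_le (gradient h x) (gradient h z)
      have h4 : L z * ‖x - z‖ ≤ L z * (3 * r z) :=
        mul_le_mul_of_nonneg_left h2 (hL z hzX)
      linarith
    exact h3.trans (Finset.le_sup' (fun z => ‖gradient h z‖ + L z * (3 * r z)) hz)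
  · intro x hx e he
    obtain ⟨z, hz, hxz⟩ := hmem x hx
    have hzX := htX z hz
    have hrz := hr z hzX
    have hseg : ∀ s ∈ Set.Icc (0:ℝ) 1, x + s • e ∈ Metric.ball z (3 * r z) := by
      intro s hs
      rw [Metric.mem_ball]
      have h_le : dist (x + s • e) x ≤ r z := by
        rw [dist_eq_norm]
        have heq : x + s • e - x = s • e := by abel
        rw [heq, norm_smul, Real.norm_eq_abs]
        have h1 : |s| ≤ 1 := abs_le.mpr ⟨by linarith [hs.1], hs.2⟩
        have h2 : |s| * ‖e‖ ≤ 1 * ‖e‖ := mul_le_mul_of_nonneg_right h1 (norm_nonneg e)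
        have h3 : ε ≤ r z := Finset.inf'_le r hz
        calc |s| * ‖e‖ ≤ 1 * ‖e‖ := h2
          _ = ‖e‖ := one_mul _
          _ ≤ ε := he
          _ ≤ r z := h3
      have h_lt : dist x z < 2 * r z := by
        rw [Metric.mem_ball] at hxz
        linarith
      calc dist (x + s • e) z ≤ dist (x + s • e) x + dist x z := dist_triangle _ _ _
        _ < r z + 2 * r z := add_lt_add_of_le_of_lt h_le h_lt
        _ = 3 * r z := by ring
    have hLz : L z ≤ LL := Finset.le_sup' L hz
    refine descent_lemma h x e LL hLL0 ?_ ?_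
    · intro s hs
      exact hdiff _ (hsub z hzX (hseg s hs))
    · intro s hs u hu
      exact (hlip z hzX _ (hseg s hs) _ (hseg u hu)).trans
        (mul_le_mul_of_nonneg_right hLz (norm_nonneg _))

lemma esum_coe {ι : Type*} (s : Finset ι) (f : ι → EReal)
    (ht : ∀ i ∈ s, f i ≠ ⊤) (hbot : ∀ i ∈ s, f i ≠ ⊥) :
    ∑ i ∈ s, f i = ((∑ i ∈ s, (f i).toReal : ℝ) : EReal) := by
  classical
  induction s using Finset.induction with
  | empty => simp
  | @insert a t ha ih =>
    rw [Finset.sum_insert ha, Finset.sum_insert ha,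
      ih (fun i hi => ht i (Finset.mem_insert_of_mem hi))
         (fun i hi => hbot i (Finset.mem_insert_of_mem hi)),
      ← EReal.coe_toReal (ht a (Finset.mem_insert_self a t)) (hbot a (Finset.mem_insert_self a t)),
      ← EReal.coe_add]
    simp

lemma ereal_nsmul_coe (n : ℕ) (m : ℝ) : n • ((m:ℝ):EReal) = (((n:ℝ)*m : ℝ):EReal) := by
  induction n with
  | zero => simp
  | succ k ih =>
    rw [succ_nsmul, ih, ← EReal.coe_add]
    congr 1
    push_cast
    ring

lemma bounded_subdiff [FiniteDimensional ℝ F] (g : F → ℝ) (hg : ConvexOn ℝ Set.univ g)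
    (A : Set F) (hA : Bornology.IsBounded A) :
    ∃ M ≥ (0:ℝ), ∀ z ∈ A, ∀ y ∈ cvxSubdiff g z, ‖y‖ ≤ M := by
  obtain ⟨R, hR⟩ := hA.subset_closedBall 0
  have hgc : Continuous g :=
    continuousOn_univ.mp (ConvexOn.continuousOn isOpen_univ hg)
  set K := Metric.closedBall (0:F) (max R 0 + 1) with hK
  have hKc : IsCompact K := isCompact_closedBall _ _
  have hKne : K.Nonempty := ⟨0, by simp [hK]; positivity⟩
  obtain ⟨z1, _, hz1'⟩ := hKc.exists_isMaxOn hKne hgc.continuousOn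
  obtain ⟨z2, _, hz2'⟩ := hKc.exists_isMinOn hKne hgc.continuousOn
  have hz1 : ∀ w ∈ K, g w ≤ g z1 := fun w hw => hz1' hw
  have hz2 : ∀ w ∈ K, g z2 ≤ g w := fun w hw => hz2' hw
  refine ⟨max (g z1 - g z2) 0, le_max_right _ _, ?_⟩
  intro z hz y hy
  rcases eq_or_ne y 0 with rfl | hy0
  · simp
  · have hzK : z ∈ K := by
      have := hR hz
      rw [Metric.mem_closedBall] at this ⊢
      have h1 : R ≤ max R 0 := le_max_left _ _
      linarith
    have hzwK : z + ‖y‖⁻¹ • y ∈ K := by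
      rw [Metric.mem_closedBall]
      calc dist (z + ‖y‖⁻¹ • y) 0 ≤ dist (z + ‖y‖⁻¹ • y) z + dist z 0 := dist_triangle _ _ _
        _ ≤ 1 + max R 0 := by
            apply add_le_add
            · rw [dist_eq_norm]
              have : z + ‖y‖⁻¹ • y - z = ‖y‖⁻¹ • y := by abel
              rw [this, norm_smul, norm_inv, norm_norm]
              rw [inv_mul_cancel₀ (norm_ne_zero_iff.mpr hy0)]
            · have := hR hz; rw [Metric.mem_closedBall] at this
              exact this.trans (le_max_left _ _)
        _ = max R 0 + 1 := by ring
    have hsub := hy (z + ‖y‖⁻¹ • y)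
    have hiy : ⟪y, (z + ‖y‖⁻¹ • y) - z⟫ = ‖y‖ := by
      have : (z + ‖y‖⁻¹ • y) - z = ‖y‖⁻¹ • y := by abel
      rw [this, real_inner_smul_right, real_inner_self_eq_norm_sq]
      field_simp [norm_ne_zero_iff.mpr hy0]
    rw [hiy] at hsub
    have h1 : g (z + ‖y‖⁻¹ • y) ≤ g z1 := hz1 _ hzwK
    have h2 : g z2 ≤ g z := hz2 _ hzK
    have : ‖y‖ ≤ g z1 - g z2 := by linarith
    exact this.trans (le_max_left _ _)

lemma arith1 (a' b Cf Cp ip A α : ℝ) (hα : 0 < α) (hA : 0 ≤ A) (hCp : 0 ≤ Cp) (hCf : 0 ≤ Cf)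
    (h1 : α*a' + A^2/2 + α*ip ≤ α*b) (h2 : -(Cp*A) ≤ ip) (h3 : b - a' ≤ Cf) :
    A^2 ≤ 4*α*Cf + 4*α^2*Cp^2 := by
  nlinarith [sq_nonneg (A - 2*α*Cp), mul_le_mul_of_nonneg_left h3 hα.le,
    mul_le_mul_of_nonneg_left h2 hα.le]
lemma arith2 (A α ε Cf Cp : ℝ) (hA : 0 ≤ A) (hα : 0 < α) (hα1 : α ≤ 1) (hCf : 0 ≤ Cf)
    (hCp : 0 ≤ Cp) (hε : 0 < ε) (hD2 : A^2 ≤ 4*α*Cf + 4*α^2*Cp^2)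
    (h3 : α*(4*Cf+4*Cp^2+4) < ε^2) : A ≤ ε := by
  nlinarith [mul_nonneg hα.le hCf, mul_nonneg (mul_nonneg hα.le hα.le) (sq_nonneg Cp),
    mul_nonneg (mul_nonneg hα.le (sub_nonneg.mpr hα1)) (sq_nonneg Cp)]
lemma arith3 (E A ε : ℝ) (hE : 0 ≤ E) (hA : 0 ≤ A) (h : E^2 = A^2) (h2 : A ≤ ε) : E ≤ ε := by
  nlinarith
lemma arith4 (α frx b a' hp hx gd Qr w ηr L σ D2 : ℝ) (hα : 0 < α)
    (hprox : α*a' + D2/2 + α*(gd - Qr*w) ≤ α*b)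
    (hdesc : hp ≤ hx + gd + L/2*D2)
    (hKey : frx + hx = Qr*ηr)
    (hedge : α*(L+σ) ≤ 1) (hD2 : 0 ≤ D2) :
    α*(frx - b + a' + hp + σ/2*D2) ≤ α*(Qr*(ηr+w)) := by
  have hmul := mul_le_mul_of_nonneg_left hdesc hα.le
  have hdd0 : 0 ≤ (1 - α*(L+σ)) * D2 := mul_nonneg (by linarith) hD2
  nlinarith [hmul, hprox, hdd0]
lemma arith5 (Z D2 σ Q : ℝ) (h1 : Q ≤ 0) (h2 : Z + σ/2*D2 ≤ Q) (h3 : 0 ≤ Z) (hσ : 0 < σ)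
    (hD2 : 0 ≤ D2) : D2 = 0 := by nlinarith

end Aux

lemma be_block_norm_le {N : ℕ} {d : Fin N → ℕ} (u : BE d) (i : Fin N) : ‖u i‖ ≤ ‖u‖ := by
  have h1 : ⟪u, u⟫ = ∑ j, ⟪u j, u j⟫ := PiLp.inner_apply u u
  have h2 : ⟪u i, u i⟫ ≤ ∑ j, ⟪u j, u j⟫ :=
    Finset.single_le_sum (fun j _ => real_inner_self_nonneg) (Finset.mem_univ i)
  have h3 : ‖u i‖^2 ≤ ‖u‖^2 := by
    rw [← real_inner_self_eq_norm_sq, ← real_inner_self_eq_norm_sq, h1]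
    exact h2
  nlinarith [norm_nonneg (u i), norm_nonneg u]


set_option maxHeartbeats 2000000 in
/-- Finite termination of the line search: sufficiently small step sizes satisfy
the sufficient-decrease inequality uniformly over `S`. -/
theorem statement13 {N : ℕ} {d : Fin N → ℕ}
    (fb : ∀ i, EuclideanSpace ℝ (Fin (d i)) → EReal)
    (g h : BE d → ℝ)
    (hfb_proper : ∀ i, Proper (fb i)) (hfb_lsc : ∀ i, LowerSemicontinuous (fb i))
    (hfb_bdd : ∀ i, ∃ m : ℝ, ∀ w, (m : EReal) ≤ fb i w)
    (hb : Blanket (fsum fb) g h)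
    (x0 : BE d) (hx0 : Ffun (fsum fb) g h x0 ≠ ⊤)
    (hne : (lvlSet (fsum fb) g h x0).Nonempty)
    (hcomp : IsCompact (lvlSet (fsum fb) g h x0))
    (αl : ℝ) (hαl : 0 < αl) (σ : ℝ) (hσ : 0 < σ) :
    ∃ abar > (0 : ℝ), ∀ x y : BE d, (x, y) ∈ Sset (fsum fb) g h x0 αl →
      Qfun (fsum fb) g h x y ≤ Ffun (fsum fb) g h x0 →
      ∀ α : ℝ, 0 < α → α < abar → ∀ i : Fin N,
        ∀ xi ∈ proxSet (scaleE α (fb i))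
            (x i - α • (gradient h x) i + (α * (Qfun (fsum fb) g h x y).toReal) • y i),
          ∀ c : ℝ, Qfun (fsum fb) g h x y ≤ (c : EReal) →
            zeta (fsum fb) h (bUpd x i xi) +
                ((σ / 2 * ‖bUpd x i xi - x‖ ^ 2 : ℝ) : EReal) ≤
              (c : EReal) * eta g (bUpd x i xi) y := by
  classical
  obtain ⟨hfdiff, hfloc⟩ := hb.h_diff
  set X := lvlSet (fsum fb) g h x0 with hXdef
  have hgcont : Continuous g :=
    continuousOn_univ.mp (ConvexOn.continuousOn isOpen_univ hb.g_convex)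
  have hΩopen : IsOpen {x : BE d | g x ≠ 0} := by
    have : {x : BE d | g x ≠ 0} = g ⁻¹' ({(0:ℝ)}ᶜ) := rfl
    rw [this]
    exact (isClosed_singleton.preimage hgcont).isOpen_compl
  have hx0cond : g x0 ≠ 0 ∧ fsum fb x0 ≠ ⊤ := by
    by_contra hc
    exact hx0 (by rw [Ffun, if_neg hc])
  set Fr0 : ℝ := ((fsum fb x0).toReal + h x0) / g x0 with hFr0
  have hF0 : Ffun (fsum fb) g h x0 = ((Fr0 : ℝ) : EReal) := by rw [Ffun, if_pos hx0cond]
  have hXprop : ∀ x ∈ X, g x ≠ 0 ∧ fsum fb x ≠ ⊤ := by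
    intro x hx
    by_contra hc
    have h1 : Ffun (fsum fb) g h x = ⊤ := by rw [Ffun, if_neg hc]
    have hle : Ffun (fsum fb) g h x ≤ Ffun (fsum fb) g h x0 := hx
    rw [h1, hF0] at hle
    exact EReal.coe_ne_top Fr0 (top_le_iff.mp hle)
  have hXΩ : X ⊆ {x : BE d | g x ≠ 0} := fun x hx => (hXprop x hx).1
  -- uniform lower bound for the blocks
  choose mi hmi using hfb_bdd
  have hmm : ∃ m : ℝ, ∀ j : Fin N, m ≤ mi j := by
    rcases isEmpty_or_nonempty (Fin N) with hN | hN
    · exact ⟨0, fun j => isEmptyElim j⟩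
    · exact ⟨Finset.univ.inf' Finset.univ_nonempty mi,
        fun j => Finset.inf'_le mi (Finset.mem_univ j)⟩
  obtain ⟨mmin, hmmin'⟩ := hmm
  have hmmin : ∀ j w, ((mmin:ℝ):EReal) ≤ fb j w := fun j w =>
    le_trans (EReal.coe_le_coe_iff.mpr (hmmin' j)) (hmi j w)
  have hbotj : ∀ j (w : EuclideanSpace ℝ (Fin (d j))), fb j w ≠ ⊥ :=
    fun j w => (hfb_proper j).2 w
  have hXdom : ∀ x ∈ X, ∀ j, fb j (x j) ≠ ⊤ := by
    intro x hx j htop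
    have hrest_ge : ((((Finset.univ.erase j).card : ℝ) * mmin : ℝ):EReal)
        ≤ ∑ k ∈ Finset.univ.erase j, fb k (x k) := by
      rw [← ereal_nsmul_coe]
      exact Finset.card_nsmul_le_sum _ _ _ (fun k _ => hmmin k (x k))
    have hrest_ne : ∑ k ∈ Finset.univ.erase j, fb k (x k) ≠ ⊥ := by
      intro hb'
      rw [hb', le_bot_iff] at hrest_ge
      exact EReal.coe_ne_bot _ hrest_ge
    have hsum : fsum fb x = fb j (x j) + ∑ k ∈ Finset.univ.erase j, fb k (x k) := by
      rw [fsum, ← Finset.add_sum_erase _ _ (Finset.mem_univ j)]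
    rw [htop, EReal.top_add_of_ne_bot hrest_ne] at hsum
    exact (hXprop x hx).2 hsum
  -- uniform descent data
  obtain ⟨ε, hε, L, hL0, G, hGbd, hdescent⟩ :=
    uniform_descent h {x : BE d | g x ≠ 0} hΩopen hfdiff hfloc X hcomp hne hXΩ
  -- max of g and min of h on X
  obtain ⟨xg, hxgX, hxg'⟩ := hcomp.exists_isMaxOn hne hgcont.continuousOn
  set Gmax := g xg with hGmax
  have hgX : ∀ x ∈ X, g x ≤ Gmax := fun x hx => hxg' hx
  have hhcont : ContinuousOn h X := fun x hx =>
    ((hfdiff x (hXΩ hx)).continuousAt).continuousWithinAt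
  obtain ⟨xh, hxhX, hxh'⟩ := hcomp.exists_isMinOn hne hhcont
  set Hlo := h xh with hHlo
  have hhX : ∀ x ∈ X, Hlo ≤ h x := fun x hx => hxh' hx
  -- bound on the subgradients over the enlarged set
  obtain ⟨R0, hR0⟩ := hcomp.isBounded.subset_closedBall 0
  set ρ := Real.sqrt (sSup (g '' X) / αl) with hρ
  have hXal_sub : Xal (fsum fb) g h x0 αl ⊆ Metric.closedBall 0 (ρ + |R0|) := by
    intro z hz
    have hz' : (Metric.infDist z X)^2 ≤ sSup (g '' X) / αl := hz
    have h0 : 0 ≤ sSup (g '' X)/αl := le_trans (sq_nonneg _) hz'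
    have h1 : Metric.infDist z X ≤ ρ := by
      rw [hρ]
      exact (Real.le_sqrt Metric.infDist_nonneg h0).mpr hz'
    obtain ⟨w, hwX, hwd⟩ := hcomp.exists_infDist_eq_dist hne z
    rw [Metric.mem_closedBall]
    have h2 : dist w 0 ≤ R0 := by
      have := hR0 hwX; rwa [Metric.mem_closedBall] at this
    calc dist z 0 ≤ dist z w + dist w 0 := dist_triangle _ _ _
      _ ≤ ρ + |R0| := add_le_add (by rw [← hwd]; exact h1) (h2.trans (le_abs_self R0))
  obtain ⟨M, hM0, hMbd⟩ := bounded_subdiff g hb.g_convex _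
    ((Metric.isBounded_closedBall).subset hXal_sub)
  have hYbd : ∀ y ∈ Yset (fsum fb) g h x0 αl, ‖y‖ ≤ M := by
    intro y hy
    rw [Yset] at hy
    obtain ⟨z, hz, hyz⟩ := Set.mem_iUnion₂.mp hy
    exact hMbd z hz y hyz
  -- constants
  set Fp := max Fr0 0 with hFpdef
  have hFp0 : (0:ℝ) ≤ Fp := le_max_right _ _
  set G' := max G 0 with hG'def
  have hG'0 : (0:ℝ) ≤ G' := le_max_right _ _
  set Cp := G' + Fp * M with hCpdef
  have hCp0 : (0:ℝ) ≤ Cp := add_nonneg hG'0 (mul_nonneg hFp0 hM0)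
  set K1 : ℝ := ((N - 1 : ℕ) : ℝ) with hK1
  set Cf := max (Fp * max Gmax 0 - Hlo - K1 * mmin - mmin) 0 with hCfdef
  have hCf0 : (0:ℝ) ≤ Cf := le_max_right _ _
  have hLσ : (0:ℝ) < L + σ := by linarith only [hL0, hσ]
  set abar := min (1/(L+σ)) (min 1 (ε^2/(4*Cf + 4*Cp^2 + 4))) with habar
  have hden : (0:ℝ) < 4*Cf + 4*Cp^2 + 4 := by positivity
  have habar_pos : 0 < abar := by
    apply lt_min
    · positivity
    · apply lt_min one_pos
      positivity
  refine ⟨abar, habar_pos, ?_⟩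
  intro x y hS hQF α hα hαa i xi hxi c hQc
  obtain ⟨hxX, hyY, hη⟩ := hS
  -- the conjugate is finite
  have hconj_ne_bot : fconj g y ≠ ⊥ := by
    have h1 := le_iSup (fun w : BE d => (((⟪w, y⟫ : ℝ) : EReal) - ((g w : ℝ) : EReal))) (0 : BE d)
    intro hbot
    have h0 : (((⟪(0:BE d), y⟫ : ℝ) : EReal) - ((g (0:BE d) : ℝ) : EReal)) ≤ fconj g y := h1
    rw [hbot, ← EReal.coe_sub] at h0
    exact absurd h0 (by simp)
  have hconj_ne_top : fconj g y ≠ ⊤ := by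
    intro htop
    rw [eta, htop, EReal.sub_top] at hη
    exact absurd hη (by simp)
  set gs := (fconj g y).toReal with hgs
  have hconj_eq : fconj g y = ((gs:ℝ):EReal) :=
    (EReal.coe_toReal hconj_ne_top hconj_ne_bot).symm
  have heta_eq : ∀ w : BE d, eta g w y = ((⟪w, y⟫ - gs : ℝ) : EReal) := by
    intro w; rw [eta, hconj_eq, EReal.coe_sub]
  set ηr := ⟪x, y⟫ - gs with hηrdef
  have hηr : 0 < ηr := by
    have h1 := hη
    rw [heta_eq x] at h1
    exact_mod_cast h1
  have hFY : ∀ w : BE d, ⟪w, y⟫ - g w ≤ gs := by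
    intro w
    have h1 : (((⟪w, y⟫ - g w : ℝ)):EReal) ≤ fconj g y := by
      have h2 := le_iSup (fun w : BE d => (((⟪w, y⟫ : ℝ) : EReal) - ((g w : ℝ) : EReal))) w
      rw [EReal.coe_sub]
      exact h2
    rw [hconj_eq] at h1
    exact_mod_cast h1
  have hηg : ηr ≤ g x := by have h1 := hFY x; rw [hηrdef]; linarith only [h1]
  -- facts about x
  have hxcond := hXprop x hxX
  have htopj : ∀ j, fb j (x j) ≠ ⊤ := hXdom x hxX
  set frx := ∑ j, (fb j (x j)).toReal with hfrxdef
  have hfsumx : fsum fb x = ((frx:ℝ):EReal) := by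
    rw [fsum]
    exact esum_coe _ _ (fun j _ => htopj j) (fun j _ => hbotj j (x j))
  have hfrx_toReal : (fsum fb x).toReal = frx := by rw [hfsumx, EReal.toReal_coe]
  -- facts about Q
  have hQcond : fsum fb x ≠ ⊤ ∧ 0 < eta g x y := ⟨hxcond.2, hη⟩
  have hetaR : (eta g x y).toReal = ηr := by rw [heta_eq x, EReal.toReal_coe]
  set Qr := (frx + h x) / ηr with hQrdef
  have hQeq : Qfun (fsum fb) g h x y = ((Qr:ℝ):EReal) := by
    rw [Qfun, if_pos hQcond, hfrx_toReal, hetaR]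
  have hQtoReal : (Qfun (fsum fb) g h x y).toReal = Qr := by rw [hQeq, EReal.toReal_coe]
  have hζx : 0 ≤ frx + h x := by
    have h1 := hb.zeta_nonneg x hxcond.2
    rw [zeta, hfsumx, ← EReal.coe_add] at h1
    exact_mod_cast h1
  have hQr0 : 0 ≤ Qr := div_nonneg hζx hηr.le
  have hQrF : Qr ≤ Fr0 := by
    have h1 := hQF
    rw [hQeq, hF0] at h1
    exact_mod_cast h1
  have hQrc : Qr ≤ c := by
    have h1 := hQc
    rw [hQeq] at h1
    exact_mod_cast h1
  have hKey : frx + h x = Qr * ηr := by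
    rw [hQrdef, div_mul_cancel₀ _ (ne_of_gt hηr)]
  -- the prox inequality
  set Gi := (gradient h x) i with hGidef
  set dd := xi - x i with hdddef
  set p := Gi - Qr • y i with hpdef
  rw [hQtoReal] at hxi
  set u := x i - α • Gi + (α * Qr) • y i with hudef
  set b := (fb i (x i)).toReal with hbdef
  have hfbx_eq : fb i (x i) = ((b:ℝ):EReal) := (EReal.coe_toReal (htopj i) (hbotj i _)).symm
  have hprox0 := hxi (x i)
  have hRHS : scaleE α (fb i) (x i) + ((‖x i - u‖^2/2 : ℝ):EReal)
      = ((α*b + ‖x i - u‖^2/2 : ℝ):EReal) := by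
    rw [scaleE, hfbx_eq, ← EReal.coe_mul, ← EReal.coe_add]
  have hfbxi_ne_top : fb i xi ≠ ⊤ := by
    intro htp
    rw [hRHS, scaleE, htp, EReal.coe_mul_top_of_pos hα, EReal.top_add_coe] at hprox0
    exact absurd (top_le_iff.mp hprox0) (EReal.coe_ne_top _)
  set a' := (fb i xi).toReal with ha'def
  have hfbxi_eq : fb i xi = ((a':ℝ):EReal) := (EReal.coe_toReal hfbxi_ne_top (hbotj i xi)).symm
  have hproxR : α*a' + ‖xi - u‖^2/2 ≤ α*b + ‖x i - u‖^2/2 := by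
    rw [hRHS, scaleE, hfbxi_eq, ← EReal.coe_mul, ← EReal.coe_add] at hprox0
    exact_mod_cast hprox0
  have hxiu : xi - u = dd + α • p := by
    rw [hudef, hpdef, hdddef]
    module
  have hxu : x i - u = α • p := by
    rw [hudef, hpdef]
    module
  have hn1 : ‖xi - u‖^2 = ‖dd‖^2 + 2*(α*⟪dd,p⟫) + α^2*‖p‖^2 := by
    rw [hxiu, norm_add_sq_real, real_inner_smul_right, norm_smul, Real.norm_eq_abs,
      abs_of_pos hα, mul_pow]
  have hn2 : ‖x i - u‖^2 = α^2*‖p‖^2 := by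
    rw [hxu, norm_smul, Real.norm_eq_abs, abs_of_pos hα, mul_pow]
  have hprox : α*a' + ‖dd‖^2/2 + α*⟪dd,p⟫ ≤ α*b := by
    rw [hn1, hn2] at hproxR
    linarith only [hproxR]
  -- bounds
  have hGi_le : ‖Gi‖ ≤ G' := by
    have h1 : ‖Gi‖ ≤ ‖gradient h x‖ := be_block_norm_le _ i
    exact h1.trans ((hGbd x hxX).trans (le_max_left _ _))
  have hyi_le : ‖y i‖ ≤ M := (be_block_norm_le y i).trans (hYbd y hyY)
  have hQrFp : Qr ≤ Fp := hQrF.trans (le_max_left _ _)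
  have hp_le : ‖p‖ ≤ Cp := by
    rw [hpdef]
    calc ‖Gi - Qr • y i‖ ≤ ‖Gi‖ + ‖Qr • y i‖ := norm_sub_le _ _
      _ = ‖Gi‖ + Qr * ‖y i‖ := by rw [norm_smul, Real.norm_eq_abs, abs_of_nonneg hQr0]
      _ ≤ G' + Fp * M := add_le_add hGi_le
          (mul_le_mul hQrFp hyi_le (norm_nonneg _) hFp0)
      _ = Cp := rfl
  have hpd_low : -(Cp * ‖dd‖) ≤ ⟪dd, p⟫ := by
    have h1 : |⟪dd, p⟫| ≤ ‖dd‖ * ‖p‖ := abs_real_inner_le_norm _ _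
    have h2 : ‖dd‖*‖p‖ ≤ ‖dd‖ * Cp := mul_le_mul_of_nonneg_left hp_le (norm_nonneg _)
    have h3 := neg_abs_le ⟪dd, p⟫
    linarith
  have haj : ∀ j, mmin ≤ (fb j (x j)).toReal := by
    intro j
    have h1 := hmmin j (x j)
    rw [← EReal.coe_toReal (htopj j) (hbotj j (x j))] at h1
    exact_mod_cast h1
  have hsum_erase : frx = b + ∑ j ∈ Finset.univ.erase i, (fb j (x j)).toReal := by
    rw [hfrxdef, hbdef, ← Finset.add_sum_erase _ _ (Finset.mem_univ i)]
  have herase_ge : K1 * mmin ≤ ∑ j ∈ Finset.univ.erase i, (fb j (x j)).toReal := by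
    have h1 := Finset.card_nsmul_le_sum (Finset.univ.erase i)
      (fun j => (fb j (x j)).toReal) mmin (fun j _ => haj j)
    have h2 : (Finset.univ.erase i).card = N - 1 := by
      rw [Finset.card_erase_of_mem (Finset.mem_univ i), Finset.card_univ, Fintype.card_fin]
    rw [h2] at h1
    simpa [hK1, nsmul_eq_mul] using h1
  have hb_le : b ≤ frx - K1 * mmin := by linarith only [hsum_erase, herase_ge]
  have ha'_ge : mmin ≤ a' := by
    have h1 := hmmin i xi
    rw [hfbxi_eq] at h1
    exact_mod_cast h1
  have hfrx_le : frx + h x ≤ Fp * max Gmax 0 := by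
    rw [hKey]
    have h1 : ηr ≤ max Gmax 0 := hηg.trans ((hgX x hxX).trans (le_max_left _ _))
    calc Qr * ηr ≤ Fp * ηr := mul_le_mul_of_nonneg_right hQrFp hηr.le
      _ ≤ Fp * max Gmax 0 := mul_le_mul_of_nonneg_left h1 hFp0
  have hba' : b - a' ≤ Cf := by
    have h2 : Hlo ≤ h x := hhX x hxX
    have h3 : b - a' ≤ Fp * max Gmax 0 - Hlo - K1*mmin - mmin := by
      linarith only [hfrx_le, h2, hb_le, ha'_ge]
    exact h3.trans (le_max_left _ _)
  -- step bound
  have hD2 : ‖dd‖^2 ≤ 4*α*Cf + 4*α^2*Cp^2 :=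
    arith1 a' b Cf Cp ⟪dd, p⟫ ‖dd‖ α hα (norm_nonneg dd) hCp0 hCf0 hprox hpd_low hba'
  have hαa2 : α < min 1 (ε^2/(4*Cf + 4*Cp^2 + 4)) := lt_of_lt_of_le hαa (min_le_right _ _)
  have hα1 : α ≤ 1 := (lt_of_lt_of_le hαa2 (min_le_left _ _)).le
  have hdε : ‖dd‖ ≤ ε := by
    have h3 : α * (4*Cf + 4*Cp^2 + 4) < ε^2 := by
      have h4 := lt_of_lt_of_le hαa2 (min_le_right _ _)
      calc α * (4*Cf+4*Cp^2+4) < (ε^2/(4*Cf+4*Cp^2+4)) * (4*Cf+4*Cp^2+4) :=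
            mul_lt_mul_of_pos_right h4 hden
        _ = ε^2 := div_mul_cancel₀ _ (ne_of_gt hden)
    exact arith2 ‖dd‖ α ε Cf Cp (norm_nonneg dd) hα hα1 hCf0 hCp0 hε hD2 h3
  -- the update vector
  set e := bUpd x i xi - x with hedef
  have hx_add : bUpd x i xi = x + e := by rw [hedef]; abel
  have he_i : e i = dd := by
    rw [hedef]
    simp [bUpd, hdddef]
  have he_j : ∀ j, j ≠ i → e j = 0 := by
    intro j hj
    rw [hedef]
    simp [bUpd, Function.update_of_ne hj]
  have hee : ⟪e, e⟫ = ⟪dd, dd⟫ := by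
    rw [PiLp.inner_apply, Finset.sum_eq_single i]
    · rw [he_i]
    · intro j _ hj
      rw [he_j j hj]
      simp
    · intro hi
      exact absurd (Finset.mem_univ i) hi
  have hnorm_e : ‖e‖^2 = ‖dd‖^2 := by
    rw [← real_inner_self_eq_norm_sq, ← real_inner_self_eq_norm_sq, hee]
  have hεe : ‖e‖ ≤ ε := arith3 ‖e‖ ‖dd‖ ε (norm_nonneg e) (norm_nonneg dd) hnorm_e hdε
  have hge' : ⟪gradient h x, e⟫ = ⟪Gi, dd⟫ := by
    rw [PiLp.inner_apply, Finset.sum_eq_single i]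
    · rw [he_i, hGidef]
    · intro j _ hj
      rw [he_j j hj]
      simp
    · intro hi
      exact absurd (Finset.mem_univ i) hi
  have hye : ⟪e, y⟫ = ⟪dd, y i⟫ := by
    rw [PiLp.inner_apply, Finset.sum_eq_single i]
    · rw [he_i]
    · intro j _ hj
      rw [he_j j hj]
      simp
    · intro hi
      exact absurd (Finset.mem_univ i) hi
  have hdesc : h (bUpd x i xi) ≤ h x + ⟪Gi, dd⟫ + L/2*‖dd‖^2 := by
    have h1 := hdescent x hxX e hεe
    rw [hge', hnorm_e] at h1
    rw [hx_add]
    exact h1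
  -- values at the updated point
  have hupd_j : ∀ j, j ≠ i → (bUpd x i xi) j = x j := fun j hj =>
    Function.update_of_ne hj _ _
  have hupd_i : (bUpd x i xi) i = xi := Function.update_self _ _ _
  have htop_plus : ∀ j, fb j ((bUpd x i xi) j) ≠ ⊤ := by
    intro j
    rcases eq_or_ne j i with rfl | hj
    · rw [hupd_i]
      exact hfbxi_ne_top
    · rw [hupd_j j hj]
      exact htopj j
  have hfplus : fsum fb (bUpd x i xi) = ((frx - b + a' : ℝ):EReal) := by
    rw [fsum, esum_coe _ _ (fun j _ => htop_plus j) (fun j _ => hbotj j _)]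
    congr 1
    have hsplit : ∑ j, (fb j ((bUpd x i xi) j)).toReal
        = (fb i ((bUpd x i xi) i)).toReal
          + ∑ j ∈ Finset.univ.erase i, (fb j ((bUpd x i xi) j)).toReal :=
      (Finset.add_sum_erase _ _ (Finset.mem_univ i)).symm
    rw [hsplit, hupd_i,
      Finset.sum_congr rfl (fun j hj => by rw [hupd_j j (Finset.ne_of_mem_erase hj)])]
    have h1 : ∑ j ∈ Finset.univ.erase i, (fb j (x j)).toReal = frx - b := by
      rw [hsum_erase]; ring
    rw [h1, ← ha'def]
    ring
  have hζplus : zeta (fsum fb) h (bUpd x i xi)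
      = ((frx - b + a' + h (bUpd x i xi) : ℝ):EReal) := by
    rw [zeta, hfplus, ← EReal.coe_add]
  have hζplus0 : 0 ≤ frx - b + a' + h (bUpd x i xi) := by
    have h1 := hb.zeta_nonneg (bUpd x i xi) (by rw [hfplus]; exact EReal.coe_ne_top _)
    rw [hζplus] at h1
    exact_mod_cast h1
  have hetaplus : eta g (bUpd x i xi) y = ((ηr + ⟪dd, y i⟫ : ℝ):EReal) := by
    rw [heta_eq]
    congr 1
    have h1 : ⟪bUpd x i xi, y⟫ = ⟪x, y⟫ + ⟪e, y⟫ := by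
      rw [hx_add, inner_add_left]
    rw [h1, hye, hηrdef]
    ring
  -- final inequality
  rw [hζplus, hetaplus, ← EReal.coe_mul, ← EReal.coe_add, EReal.coe_le_coe_iff, hnorm_e]
  set w := ⟪dd, y i⟫ with hwdef
  have hpd_expand : ⟪dd, p⟫ = ⟪dd, Gi⟫ - Qr * w := by
    rw [hpdef, inner_sub_right, real_inner_smul_right]
  have hcomm : ⟪dd, Gi⟫ = ⟪Gi, dd⟫ := real_inner_comm _ _
  have hα_edge : α*(L+σ) ≤ 1 := by
    have h1 : α < 1/(L+σ) := lt_of_lt_of_le hαa (min_le_left _ _)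
    have h2 : α*(L+σ) < (1/(L+σ))*(L+σ) := mul_lt_mul_of_pos_right h1 hLσ
    rw [one_div_mul_cancel (ne_of_gt hLσ)] at h2
    exact h2.le
  have hQmain : frx - b + a' + h (bUpd x i xi) + σ/2*‖dd‖^2 ≤ Qr * (ηr + w) := by
    rw [hpd_expand, hcomm] at hprox
    have hgoalα : α*(frx - b + a' + h (bUpd x i xi) + σ/2*‖dd‖^2) ≤ α*(Qr*(ηr+w)) :=
      arith4 α frx b a' (h (bUpd x i xi)) (h x) ⟪Gi, dd⟫ Qr w ηr L σ (‖dd‖^2) hα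
        hprox hdesc hKey hα_edge (sq_nonneg _)
    exact le_of_mul_le_mul_left hgoalα hα
  rcases le_or_gt 0 (ηr + w) with hposw | hnegw
  · exact hQmain.trans (mul_le_mul_of_nonneg_right hQrc hposw)
  · exfalso
    have h1 : Qr*(ηr+w) ≤ 0 := mul_nonpos_of_nonneg_of_nonpos hQr0 hnegw.le
    have h2 : ‖dd‖^2 = 0 :=
      arith5 (frx - b + a' + h (bUpd x i xi)) (‖dd‖^2) σ (Qr*(ηr+w)) h1 hQmain hζplus0 hσ
        (sq_nonneg _)
    have h4 : dd = 0 := by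
      rwa [pow_eq_zero_iff (by norm_num : (2:ℕ) ≠ 0), norm_eq_zero] at h2
    have h5 : w = 0 := by rw [hwdef, h4, inner_zero_left]
    rw [h5, add_zero] at hnegw
    exact lt_irrefl (0:ℝ) (hηr.trans hnegw)

end Paper
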